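/- arXiv:2208.02082 — 2 statements merged into one kernel-verified Lean document; each statement's English description precedes it below -/
import Mathlib

section
/- Let g = p ⊕ k be a Cartan decomposition of a semisimple real Lie algebra with orthonormal basis e_1,...,e_n of p with respect to an invariant form, and let D = Σ_i e_i ⊗ X_i ∈ Cl(p) ⊗ Ug (with X_i the dual basis in p, so X_i = e_i). Then D² = −1 ⊗ (Ω_g − Ω_k) + Σ_{i<j} e_i e_j ⊗ [X_i, X_j], where the products e_i e_j are taken in the Clifford algebra Cl(p) and [X_i, X_j] ∈ k. -/
open scoped TensorProduct

theorem aux_split {A : Type*} [AddCommMonoid A] {n : ℕ} (f : Fin n → Fin n → A) :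
    ∑ i, ∑ j, f i j = ∑ i, f i i + ∑ i, ∑ j ∈ Finset.Ioi i, (f i j + f j i) := by
  have key : ∀ g : Fin n → Fin n → A, ∑ i, ∑ j ∈ Finset.Ioi i, g i j
      = ∑ i, ∑ j, if i < j then g i j else 0 := by
    intro g
    refine Finset.sum_congr rfl fun i _ => ?_
    rw [show Finset.Ioi i = Finset.univ.filter (fun j => i < j) by ext j; simp,
      Finset.sum_filter]
  have tri : ∀ i j : Fin n, f i j =
      (if i = j then f i j else 0) + ((if i < j then f i j else 0)
        + (if j < i then f i j else 0)) := by
    intro i j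
    rcases lt_trichotomy i j with h | h | h
    · simp [h, h.ne, not_lt_of_gt h]
    · subst h; simp
    · simp [h, h.ne', not_lt_of_gt h]
  calc ∑ i, ∑ j, f i j
      = ∑ i, ∑ j, ((if i = j then f i j else 0) + ((if i < j then f i j else 0)
        + (if j < i then f i j else 0))) := by
        refine Finset.sum_congr rfl fun i _ => Finset.sum_congr rfl fun j _ => tri i j
    _ = ∑ i, f i i + ∑ i, ∑ j ∈ Finset.Ioi i, (f i j + f j i) := by
        simp only [Finset.sum_add_distrib]
        congr 1
        · simp
        · rw [key fun i j => f i j, key fun i j => f j i]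
          congr 1
          rw [Finset.sum_comm]

/-- for `g = p ⊕ k` with orthonormal (for the invariant form) basis
`e_1,…,e_n` of `p` satisfying the Clifford relations `e_i² = −1`, `e_ie_j = −e_je_i`,
and `D = Σ_i e_i ⊗ X_i ∈ Cl(p) ⊗ Ug`, one has
`D² = −1 ⊗ (Ω_g − Ω_k) + Σ_{i<j} e_i e_j ⊗ [X_i, X_j]`. -/
theorem dirac_squared (n : ℕ) (L : Type*) [LieRing L] [LieAlgebra ℝ L]
    (M : Type*) [AddCommGroup M] [Module ℝ M] (Q : QuadraticForm ℝ M)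
    (e : Fin n → M) (X : Fin n → L)
    (hQ : ∀ i, Q (e i) = -1)
    (horth : ∀ i j, i ≠ j → QuadraticMap.polar (⇑Q) (e i) (e j) = 0)
    (Ωg Ωk : UniversalEnvelopingAlgebra ℝ L)
    (hΩ : ∑ i : Fin n, (UniversalEnvelopingAlgebra.ι ℝ (X i) :
            UniversalEnvelopingAlgebra ℝ L) ^ 2 = Ωg - Ωk) :
    (∑ i : Fin n, (CliffordAlgebra.ι Q (e i)) ⊗ₜ[ℝ]
        (UniversalEnvelopingAlgebra.ι ℝ (X i) : UniversalEnvelopingAlgebra ℝ L)) ^ 2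
      = -((1 : CliffordAlgebra Q) ⊗ₜ[ℝ] (Ωg - Ωk))
        + ∑ i : Fin n, ∑ j ∈ Finset.Ioi i,
            (CliffordAlgebra.ι Q (e i) * CliffordAlgebra.ι Q (e j)) ⊗ₜ[ℝ]
              (UniversalEnvelopingAlgebra.ι ℝ ⁅X i, X j⁆ :
                UniversalEnvelopingAlgebra ℝ L) := by
  set c : Fin n → CliffordAlgebra Q := fun i => CliffordAlgebra.ι Q (e i) with hc
  set u : Fin n → UniversalEnvelopingAlgebra ℝ L :=
    fun i => UniversalEnvelopingAlgebra.ι ℝ (X i) with hu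
  have expand : (∑ i : Fin n, c i ⊗ₜ[ℝ] u i) ^ 2
      = ∑ i : Fin n, ∑ j : Fin n, (c i * c j) ⊗ₜ[ℝ] (u i * u j) := by
    rw [sq, Finset.sum_mul_sum]
    refine Finset.sum_congr rfl fun i _ => Finset.sum_congr rfl fun j _ => ?_
    rw [Algebra.TensorProduct.tmul_mul_tmul]
  rw [expand, aux_split (fun i j => (c i * c j) ⊗ₜ[ℝ] (u i * u j))]
  congr 1
  · -- diagonal
    have hdiag : ∀ i : Fin n, (c i * c i) ⊗ₜ[ℝ] (u i * u i)
        = -((1 : CliffordAlgebra Q) ⊗ₜ[ℝ] (u i ^ 2)) := by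
      intro i
      rw [hc, CliffordAlgebra.ι_sq_scalar, hQ i, map_neg, map_one, sq,
        TensorProduct.neg_tmul]
    calc ∑ i : Fin n, (c i * c i) ⊗ₜ[ℝ] (u i * u i)
        = ∑ i : Fin n, -((1 : CliffordAlgebra Q) ⊗ₜ[ℝ] (u i ^ 2)) :=
          Finset.sum_congr rfl fun i _ => hdiag i
      _ = -((1 : CliffordAlgebra Q) ⊗ₜ[ℝ] (Ωg - Ωk)) := by
          rw [Finset.sum_neg_distrib, ← TensorProduct.tmul_sum, hΩ]
  · -- off-diagonal
    refine Finset.sum_congr rfl fun i _ => Finset.sum_congr rfl fun j hj => ?_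
    have hij : i ≠ j := (Finset.mem_Ioi.mp hj).ne
    have hanti : c j * c i = -(c i * c j) := by
      have := CliffordAlgebra.ι_mul_ι_add_swap (Q := Q) (e i) (e j)
      rw [horth i j hij, map_zero] at this
      rw [hc]
      linear_combination (norm := noncomm_ring) this
    have hlie : u i * u j - u j * u i = UniversalEnvelopingAlgebra.ι ℝ ⁅X i, X j⁆ := by
      letI : LieRing (UniversalEnvelopingAlgebra ℝ L) := LieRing.ofAssociativeRing
      rw [hu, LieHom.map_lie, Ring.lie_def]
    rw [hanti, TensorProduct.neg_tmul, ← hlie, TensorProduct.tmul_sub]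
    abel
end

section
/- With the Green's function kernel K(y,a) = a²·u_a(y) from the problem −u'' + c²u = f on (1,∞) with Dirichlet boundary at 1 (where c = √(n²+1) ≥ 1), the double integral ∫₁^∞∫₁^∞ |K(y,a)|² (da/a²)(dy/y²) is finite and bounded by a constant multiple of 1/(n²+1); consequently Σ_{n∈ℤ} of these bounds converges, i.e., the resolvent kernel is Hilbert–Schmidt on L²((1,∞)×𝕋¹, dx dy/y²). -/
open MeasureTheory

/-- The resolvent kernel `K(y,a) = a²·u_a(y)` for `−d²/dy² + c²` on `(1,∞)` with
Dirichlet boundary at `1`. -/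
noncomputable def resolventKernel (c : ℝ) (y a : ℝ) : ℝ :=
  if y ≤ a then
    (Real.exp (2 * c) * Real.exp (-c * y) - Real.exp (c * y)) * Real.exp (-c * a) / (2 * c)
  else
    (Real.exp (2 * c) * Real.exp (-c * a) - Real.exp (c * a)) * Real.exp (-c * y) / (2 * c)

lemma resolventKernel_sq_le {c y a : ℝ} (hc : 0 < c) (hy : 1 ≤ y) (ha : 1 ≤ a) :
    (resolventKernel c y a) ^ 2 ≤ (4 * c ^ 2)⁻¹ := by
  have key : ∀ u v : ℝ, 1 ≤ u → 1 ≤ v → u ≤ v →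
      ((Real.exp (2*c) * Real.exp (-c*u) - Real.exp (c*u)) * Real.exp (-c*v) / (2*c)) ^ 2
        ≤ (4 * c ^ 2)⁻¹ := by
    intro u v hu hv huv
    have hA : Real.exp (2*c) * Real.exp (-c*u) * Real.exp (-c*v) ≤ 1 := by
      rw [← Real.exp_add, ← Real.exp_add, Real.exp_le_one_iff]
      nlinarith
    have hB : Real.exp (c*u) * Real.exp (-c*v) ≤ 1 := by
      rw [← Real.exp_add, Real.exp_le_one_iff]
      nlinarith
    have hA0 : 0 ≤ Real.exp (2*c) * Real.exp (-c*u) * Real.exp (-c*v) := by positivity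
    have hB0 : 0 ≤ Real.exp (c*u) * Real.exp (-c*v) := by positivity
    have hnum : ((Real.exp (2*c) * Real.exp (-c*u) - Real.exp (c*u)) * Real.exp (-c*v)) ^ 2 ≤ 1 := by
      nlinarith
    rw [div_pow]
    have h4 : (2*c) ^ 2 = 4 * c ^ 2 := by ring
    rw [h4, inv_eq_one_div]
    gcongr
  unfold resolventKernel
  split_ifs with h
  · exact key y a hy ha h
  · exact key a y ha hy (le_of_not_ge h)

lemma measurable_resolventKernel (c : ℝ) :
    Measurable (fun p : ℝ × ℝ => resolventKernel c p.1 p.2) := by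
  unfold resolventKernel
  exact Measurable.ite (measurableSet_le measurable_fst measurable_snd)
    (by fun_prop) (by fun_prop)

lemma integrableOn_inv_sq : IntegrableOn (fun x : ℝ => (x ^ 2)⁻¹) (Set.Ioi 1) := by
  have := integrableOn_Ioi_rpow_of_lt (a := -2) (by norm_num) (c := 1) one_pos
  refine this.congr_fun (fun x hx => ?_) measurableSet_Ioi
  have hx0 : (0:ℝ) < x := lt_trans one_pos hx
  show x ^ (-2:ℝ) = (x ^ 2)⁻¹
  rw [Real.rpow_neg hx0.le, ← Real.rpow_natCast x 2]
  norm_num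

lemma integral_inv_sq : ∫ x in Set.Ioi (1:ℝ), (x ^ 2)⁻¹ = 1 := by
  have h := integral_Ioi_rpow_of_lt (a := -2) (by norm_num) (c := 1) one_pos
  rw [show ∫ x in Set.Ioi (1:ℝ), (x ^ 2)⁻¹ = ∫ x in Set.Ioi (1:ℝ), x ^ (-2:ℝ) from ?_, h]
  · norm_num
  · refine setIntegral_congr_fun measurableSet_Ioi (fun x hx => ?_)
    have hx0 : (0:ℝ) < x := lt_trans one_pos hx
    rw [Real.rpow_neg hx0.le, ← Real.rpow_natCast x 2]
    norm_num

/-- with `c = √(n²+1)`, the kernel is square-integrable against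
`(da/a²)(dy/y²)` on `(1,∞)²`, with integral bounded by a constant multiple of
`1/(n²+1)`; summing over `n ∈ ℤ` converges, i.e. the resolvent is Hilbert–Schmidt on
the cylinder. -/
theorem resolvent_kernel_hilbert_schmidt :
    ∃ C : ℝ,
      (∀ n : ℤ,
        IntegrableOn
          (fun p : ℝ × ℝ =>
            (resolventKernel (Real.sqrt ((n : ℝ) ^ 2 + 1)) p.1 p.2) ^ 2
              / (p.1 ^ 2 * p.2 ^ 2))
          (Set.Ioi (1 : ℝ) ×ˢ Set.Ioi (1 : ℝ))) ∧
      (∀ n : ℤ,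
        (∫ p in Set.Ioi (1 : ℝ) ×ˢ Set.Ioi (1 : ℝ),
            (resolventKernel (Real.sqrt ((n : ℝ) ^ 2 + 1)) p.1 p.2) ^ 2
              / (p.1 ^ 2 * p.2 ^ 2))
          ≤ C / ((n : ℝ) ^ 2 + 1)) ∧
      Summable (fun n : ℤ =>
        ∫ p in Set.Ioi (1 : ℝ) ×ˢ Set.Ioi (1 : ℝ),
          (resolventKernel (Real.sqrt ((n : ℝ) ^ 2 + 1)) p.1 p.2) ^ 2
            / (p.1 ^ 2 * p.2 ^ 2)) := by
  -- setup
  have hsetm : MeasurableSet (Set.Ioi (1:ℝ) ×ˢ Set.Ioi (1:ℝ)) :=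
    measurableSet_Ioi.prod measurableSet_Ioi
  -- notation
  set S := Set.Ioi (1:ℝ) ×ˢ Set.Ioi (1:ℝ) with hS
  have hc : ∀ n : ℤ, (0:ℝ) < Real.sqrt ((n:ℝ)^2 + 1) := fun n =>
    Real.sqrt_pos.mpr (by positivity)
  have hcsq : ∀ n : ℤ, (Real.sqrt ((n:ℝ)^2 + 1)) ^ 2 = (n:ℝ)^2 + 1 := fun n =>
    Real.sq_sqrt (by positivity)
  -- the dominating function and its integrability
  have hgint : ∀ n : ℤ, IntegrableOn
      (fun p : ℝ × ℝ => (((n:ℝ)^2+1)⁻¹ * 4⁻¹ * (p.1 ^ 2)⁻¹) * (p.2 ^ 2)⁻¹) S := by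
    intro n
    rw [hS, IntegrableOn, Measure.volume_eq_prod, ← Measure.prod_restrict]
    exact (integrableOn_inv_sq.const_mul _).mul_prod integrableOn_inv_sq
  have hgval : ∀ n : ℤ, (∫ p in S, (((n:ℝ)^2+1)⁻¹ * 4⁻¹ * (p.1 ^ 2)⁻¹) * (p.2 ^ 2)⁻¹)
      = ((n:ℝ)^2+1)⁻¹ * 4⁻¹ := by
    intro n
    rw [hS, Measure.volume_eq_prod,
      setIntegral_prod_mul (fun x : ℝ => ((n:ℝ)^2+1)⁻¹ * 4⁻¹ * (x ^ 2)⁻¹)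
        (fun x : ℝ => (x ^ 2)⁻¹) _ _,
      integral_const_mul, integral_inv_sq]
    ring
  -- pointwise bound on S
  have hptle : ∀ n : ℤ, ∀ p ∈ S,
      (resolventKernel (Real.sqrt ((n:ℝ)^2+1)) p.1 p.2) ^ 2 / (p.1 ^ 2 * p.2 ^ 2)
        ≤ (((n:ℝ)^2+1)⁻¹ * 4⁻¹ * (p.1 ^ 2)⁻¹) * (p.2 ^ 2)⁻¹ := by
    intro n p hp
    obtain ⟨hp1, hp2⟩ := hp
    have h1 : (1:ℝ) < p.1 := hp1
    have h2 : (1:ℝ) < p.2 := hp2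
    have hK := resolventKernel_sq_le (hc n) h1.le h2.le (a := p.2) (y := p.1)
    rw [hcsq n] at hK
    have hden : (0:ℝ) < p.1 ^ 2 * p.2 ^ 2 := by positivity
    calc (resolventKernel (Real.sqrt ((n:ℝ)^2+1)) p.1 p.2) ^ 2 / (p.1 ^ 2 * p.2 ^ 2)
        ≤ (4 * ((n:ℝ)^2+1))⁻¹ / (p.1 ^ 2 * p.2 ^ 2) := by gcongr
      _ = (((n:ℝ)^2+1)⁻¹ * 4⁻¹ * (p.1 ^ 2)⁻¹) * (p.2 ^ 2)⁻¹ := by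
          field_simp
  -- nonnegativity
  have hptnn : ∀ n : ℤ, ∀ p : ℝ × ℝ,
      0 ≤ (resolventKernel (Real.sqrt ((n:ℝ)^2+1)) p.1 p.2) ^ 2 / (p.1 ^ 2 * p.2 ^ 2) := by
    intro n p; positivity
  -- integrability of f
  have hfint : ∀ n : ℤ, IntegrableOn
      (fun p : ℝ × ℝ =>
        (resolventKernel (Real.sqrt ((n:ℝ)^2+1)) p.1 p.2) ^ 2 / (p.1 ^ 2 * p.2 ^ 2)) S := by
    intro n
    refine (hgint n).mono' ?_ ?_
    · exact (((measurable_resolventKernel _).pow_const 2).div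
        ((measurable_fst.pow_const 2).mul (measurable_snd.pow_const 2))).aestronglyMeasurable
    · filter_upwards [ae_restrict_mem hsetm] with p hp
      rw [Real.norm_eq_abs, abs_of_nonneg (hptnn n p)]
      exact hptle n p hp
  -- integral bound
  have hbound : ∀ n : ℤ,
      (∫ p in S, (resolventKernel (Real.sqrt ((n:ℝ)^2+1)) p.1 p.2) ^ 2 / (p.1 ^ 2 * p.2 ^ 2))
        ≤ (4:ℝ)⁻¹ / ((n:ℝ)^2+1) := by
    intro n
    have := setIntegral_mono_on (hfint n) (hgint n) hsetm (hptle n)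
    rw [hgval n] at this
    refine this.trans_eq ?_
    rw [div_eq_mul_inv]; ring
  refine ⟨(4:ℝ)⁻¹, hfint, hbound, ?_⟩
  -- summability
  have hnn : ∀ n : ℤ, 0 ≤ ∫ p in S,
      (resolventKernel (Real.sqrt ((n:ℝ)^2+1)) p.1 p.2) ^ 2 / (p.1 ^ 2 * p.2 ^ 2) :=
    fun n => setIntegral_nonneg hsetm (fun p _ => hptnn n p)
  have hsummaj : Summable (fun n : ℤ => (4:ℝ)⁻¹ / ((n:ℝ)^2+1)) := by
    have hnat : Summable (fun n : ℕ => (4:ℝ)⁻¹ / ((n:ℝ)^2+1)) := by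
      have hbase : Summable (fun n : ℕ => 1 / ((n:ℝ)+1) ^ 2) := by
        have := (summable_nat_add_iff (f := fun n : ℕ => 1 / (n:ℝ) ^ 2) 1).mpr
          (Real.summable_one_div_nat_pow.mpr one_lt_two)
        simpa using this
      refine Summable.of_nonneg_of_le (fun n => by positivity) (fun n => ?_) hbase
      rw [div_le_div_iff₀ (by positivity) (by positivity)]
      nlinarith [sq_nonneg ((n:ℝ) - 1)]
    refine Summable.of_nat_of_neg ?_ ?_ <;> simpa using hnat
  refine Summable.of_nonneg_of_le hnn (fun n => hbound n) hsummaj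
end
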